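/- arXiv:1304.1207 — 3 statements merged into one kernel-verified Lean document; each statement's English description precedes it below -/
import Mathlib

section
/- A partition 𝒫 of a finite abelian group G is Fourier-reflexive (i.e., 𝒫̂̂ = 𝒫) if and only if |𝒫| = |𝒫̂|, that is, if and only if 𝒫 and its dual partition 𝒫̂ have the same number of blocks. -/
open Finset
open scoped Classical

variable {G : Type*} [AddCommGroup G] [Fintype G]

/-- The sum `Σ_{g ∈ P_c} χ(g)` of the character `χ` over the block of the partition
(setoid) `P` of `G` indexed by `c`. -/
noncomputable def blockSum (P : Setoid G) (χ : AddChar G ℂ) (c : Quotient P) : ℂ :=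
  ∑ g : G, if Quotient.mk P g = c then χ g else 0

/-- The dual partition `P̂` of the character group `Ĝ`:  `χ ∼ χ'` iff the sums of `χ` and of
`χ'` over each block of `P` agree. -/
noncomputable def dualSetoid (P : Setoid G) : Setoid (AddChar G ℂ) :=
  Setoid.ker (blockSum P)

/-- The sum `Σ_{χ ∈ Q_c} χ(g)` over the block of the dual partition indexed by `c`. -/
noncomputable def dualBlockSum (P : Setoid G) (g : G) (c : Quotient (dualSetoid P)) : ℂ :=
  ∑ᶠ χ : AddChar G ℂ, if Quotient.mk (dualSetoid P) χ = c then χ g else 0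

/-- The bidual partition `P̂̂`, viewed as a partition of `G` by identifying the double
character group with `G` via `g(χ) = χ(g)`. -/
noncomputable def bidualSetoid (P : Setoid G) : Setoid G :=
  Setoid.ker (dualBlockSum P)

lemma dualBlockSum_eq_sum (P : Setoid G) (g : G) (c : Quotient (dualSetoid P)) :
    dualBlockSum P g c = ∑ χ : AddChar G ℂ, if Quotient.mk (dualSetoid P) χ = c then χ g else 0 :=
  finsum_eq_sum_of_fintype _

lemma blockSum_out (P : Setoid G) (χ : AddChar G ℂ) (m : Quotient P) :
    blockSum P (Quotient.out (Quotient.mk (dualSetoid P) χ)) m = blockSum P χ m := by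
  exact congrFun (Setoid.ker_apply_mk_out (f := blockSum P) χ) m

lemma dualBlockSum_out (P : Setoid G) (g : G) :
    dualBlockSum P (Quotient.out (Quotient.mk (bidualSetoid P) g)) = dualBlockSum P g := by
  exact Setoid.ker_apply_mk_out (f := dualBlockSum P) g

lemma key (P : Setoid G) (m : Quotient P) (g : G) :
    ∑ χ : AddChar G ℂ, blockSum P χ m * χ g
      = if Quotient.mk P (-g) = m then (Fintype.card G : ℂ) else 0 := by
  simp only [blockSum, Finset.sum_mul, ite_mul, zero_mul]
  rw [Finset.sum_comm]
  have step : ∀ h : G, ∑ χ : AddChar G ℂ, (if Quotient.mk P h = m then χ h * χ g else 0)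
      = if Quotient.mk P h = m then (if h + g = 0 then (Fintype.card G : ℂ) else 0) else 0 := by
    intro h
    by_cases hm : Quotient.mk P h = m
    · simp only [if_pos hm]
      simp_rw [← AddChar.map_add_eq_mul]
      rw [AddChar.sum_apply_eq_ite]
    · simp only [if_neg hm, Finset.sum_const_zero]
  simp_rw [step]
  have swap : ∀ h : G, (if Quotient.mk P h = m then (if h + g = 0 then (Fintype.card G : ℂ) else 0) else 0)
      = if h = -g then (if Quotient.mk P h = m then (Fintype.card G : ℂ) else 0) else 0 := by
    intro h
    by_cases h1 : h = -g
    · subst h1; simp [neg_add_cancel]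
    · have : h + g ≠ 0 := fun hc => h1 (eq_neg_of_add_eq_zero_left hc)
      simp [this, h1]
  simp_rw [swap]
  rw [Finset.sum_ite_eq' Finset.univ (-g) (fun h => if Quotient.mk P h = m then (Fintype.card G : ℂ) else 0)]
  simp

lemma sum_mul_dualBlockSum (P : Setoid G) (b : Quotient (dualSetoid P) → ℂ) (g : G) :
    ∑ c : Quotient (dualSetoid P), b c * dualBlockSum P g c
      = ∑ χ : AddChar G ℂ, b (Quotient.mk (dualSetoid P) χ) * χ g := by
  simp_rw [dualBlockSum_eq_sum, Finset.mul_sum, mul_ite, mul_zero]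
  rw [Finset.sum_comm]
  refine Finset.sum_congr rfl fun χ _ => ?_
  rw [Finset.sum_ite_eq Finset.univ (Quotient.mk (dualSetoid P) χ)
    (fun c => b c * χ g)]
  simp

lemma sum_mul_blockSum (P : Setoid G) (a : Quotient P → ℂ) (χ : AddChar G ℂ) :
    ∑ m : Quotient P, a m * blockSum P χ m = ∑ h : G, a (Quotient.mk P h) * χ h := by
  simp_rw [blockSum, Finset.mul_sum, mul_ite, mul_zero]
  rw [Finset.sum_comm]
  refine Finset.sum_congr rfl fun h _ => ?_
  rw [Finset.sum_ite_eq Finset.univ (Quotient.mk P h) (fun m => a m * χ h)]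
  simp

lemma sum_T_dualBlockSum (P : Setoid G) (m : Quotient P) (g : G) :
    ∑ c : Quotient (dualSetoid P), blockSum P (Quotient.out c) m * dualBlockSum P g c
      = if Quotient.mk P (-g) = m then (Fintype.card G : ℂ) else 0 := by
  rw [sum_mul_dualBlockSum P (fun c => blockSum P (Quotient.out c) m) g]
  simp_rw [blockSum_out]
  exact key P m g

lemma mk_neg_eq (P : Setoid G) (g g' : G) (h : dualBlockSum P g = dualBlockSum P g') :
    Quotient.mk P (-g) = Quotient.mk P (-g') := by
  have h1 := sum_T_dualBlockSum P (Quotient.mk P (-g)) g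
  have h2 := sum_T_dualBlockSum P (Quotient.mk P (-g)) g'
  rw [h] at h1
  rw [h1] at h2
  rw [if_pos rfl] at h2
  by_contra hne
  rw [if_neg (fun hc => hne hc.symm)] at h2
  have hc : (Fintype.card G : ℂ) ≠ 0 := Nat.cast_ne_zero.mpr Fintype.card_ne_zero
  exact hc h2

/-- Negation (inversion) descends to the dual quotient. -/
noncomputable def negQ (P : Setoid G) : Quotient (dualSetoid P) → Quotient (dualSetoid P) :=
  Quotient.map (fun χ => χ⁻¹) (by
    intro χ χ' h
    have h' : blockSum P χ = blockSum P χ' := h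
    show blockSum P χ⁻¹ = blockSum P χ'⁻¹
    funext m
    have conjeq : ∀ ψ : AddChar G ℂ, blockSum P ψ⁻¹ m = (starRingEnd ℂ) (blockSum P ψ m) := by
      intro ψ
      simp only [blockSum, map_sum, apply_ite (starRingEnd ℂ), map_zero]
      refine Finset.sum_congr rfl fun x _ => ?_
      by_cases hx : Quotient.mk P x = m
      · rw [if_pos hx, if_pos hx, AddChar.inv_apply, AddChar.map_neg_eq_conj]
      · rw [if_neg hx, if_neg hx]
    rw [conjeq, conjeq, h'])

lemma negQ_mk (P : Setoid G) (χ : AddChar G ℂ) :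
    negQ P (Quotient.mk (dualSetoid P) χ) = Quotient.mk (dualSetoid P) χ⁻¹ := rfl

lemma negQ_negQ (P : Setoid G) (c : Quotient (dualSetoid P)) : negQ P (negQ P c) = c := by
  induction c using Quotient.ind
  rw [negQ_mk, negQ_mk, inv_inv]

lemma negQ_eq_iff (P : Setoid G) (c d : Quotient (dualSetoid P)) :
    negQ P c = d ↔ c = negQ P d := by
  constructor
  · rintro rfl; rw [negQ_negQ]
  · rintro rfl; rw [negQ_negQ]

lemma dualBlockSum_neg (P : Setoid G) (g : G) (c : Quotient (dualSetoid P)) :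
    dualBlockSum P (-g) c = dualBlockSum P g (negQ P c) := by
  rw [dualBlockSum_eq_sum, dualBlockSum_eq_sum]
  refine Fintype.sum_equiv (Equiv.inv (AddChar G ℂ)) _ _ fun ψ => ?_
  simp only [Equiv.inv_apply]
  have h1 : Quotient.mk (dualSetoid P) ψ = c ↔ Quotient.mk (dualSetoid P) ψ⁻¹ = negQ P c := by
    rw [← negQ_mk]
    constructor
    · rintro rfl; rfl
    · intro hh
      have := congrArg (negQ P) hh
      rwa [negQ_negQ, negQ_negQ] at this
  have h2 : (ψ⁻¹ : AddChar G ℂ) g = ψ (-g) := AddChar.inv_apply ψ g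
  by_cases hc : Quotient.mk (dualSetoid P) ψ = c
  · rw [if_pos hc, if_pos (h1.mp hc), h2]
  · rw [if_neg hc, if_neg (fun hh => hc (h1.mpr hh))]

lemma dualBlockSum_neg_iff (P : Setoid G) (g g' : G) :
    dualBlockSum P (-g) = dualBlockSum P (-g') ↔ dualBlockSum P g = dualBlockSum P g' := by
  constructor
  · intro h
    funext c
    have h1 := congrFun h (negQ P c)
    rwa [dualBlockSum_neg, dualBlockSum_neg, negQ_negQ] at h1
  · intro h
    funext c
    rw [dualBlockSum_neg, dualBlockSum_neg, congrFun h _]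

lemma ft_inj (f : G → ℂ) (hf : ∀ χ : AddChar G ℂ, ∑ x : G, f x * χ x = 0) :
    f = 0 := by
  funext g
  have h0 : ∑ χ : AddChar G ℂ, (∑ x : G, f x * χ x) * χ (-g) = 0 := by
    simp [hf]
  have h1 : ∑ χ : AddChar G ℂ, (∑ x : G, f x * χ x) * χ (-g)
      = (Fintype.card G : ℂ) * f g := by
    simp_rw [Finset.sum_mul, mul_assoc, ← AddChar.map_add_eq_mul]
    rw [Finset.sum_comm]
    have step : ∀ x : G, ∑ χ : AddChar G ℂ, f x * χ (x + -g)
        = f x * (if x + -g = 0 then (Fintype.card G : ℂ) else 0) := by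
      intro x
      rw [← Finset.mul_sum, AddChar.sum_apply_eq_ite]
    simp_rw [step, mul_ite, mul_zero]
    have hcond : ∀ x : G, (x + -g = 0) = (x = g) := by
      intro x
      simp [add_neg_eq_zero]
    simp_rw [hcond]
    rw [Finset.sum_ite_eq' Finset.univ g (fun x => f x * (Fintype.card G : ℂ))]
    simp [mul_comm]
  rw [h0] at h1
  have hc : (Fintype.card G : ℂ) ≠ 0 := Nat.cast_ne_zero.mpr Fintype.card_ne_zero
  have := (mul_eq_zero.mp h1.symm).resolve_left hc
  simpa using this

lemma T_linIndep (P : Setoid G) :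
    LinearIndependent ℂ
      (fun (m : Quotient P) (c : Quotient (dualSetoid P)) => blockSum P (Quotient.out c) m) := by
  rw [Fintype.linearIndependent_iff]
  intro a ha m
  have hχ : ∀ χ : AddChar G ℂ, ∑ x : G, a (Quotient.mk P x) * χ x = 0 := by
    intro χ
    have h1 := congrFun ha (Quotient.mk (dualSetoid P) χ)
    simp only [Finset.sum_apply, Pi.smul_apply, smul_eq_mul, Pi.zero_apply] at h1
    simp_rw [blockSum_out] at h1
    rwa [sum_mul_blockSum] at h1
  have h2 := ft_inj (fun x => a (Quotient.mk P x)) hχ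
  have h3 := congrFun h2 (Quotient.out m)
  simpa [Quotient.out_eq] using h3

lemma card_le_dual (P : Setoid G) :
    Nat.card (Quotient P) ≤ Nat.card (Quotient (dualSetoid P)) := by
  rw [Nat.card_eq_fintype_card, Nat.card_eq_fintype_card]
  simpa [Module.finrank_fintype_fun_eq_card] using (T_linIndep P).fintype_card_le_finrank

lemma U_linIndep (P : Setoid G) :
    LinearIndependent ℂ
      (fun (c : Quotient (dualSetoid P)) (b : Quotient (bidualSetoid P)) =>
        dualBlockSum P (Quotient.out b) c) := by
  rw [Fintype.linearIndependent_iff]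
  intro a ha c
  have hg : ∀ g : G, ∑ χ : AddChar G ℂ, a (Quotient.mk (dualSetoid P) χ) * χ g = 0 := by
    intro g
    have h1 := congrFun ha (Quotient.mk (bidualSetoid P) g)
    simp only [Finset.sum_apply, Pi.smul_apply, smul_eq_mul, Pi.zero_apply] at h1
    have h2 : ∀ c' : Quotient (dualSetoid P),
        dualBlockSum P (Quotient.out (Quotient.mk (bidualSetoid P) g)) c'
          = dualBlockSum P g c' := fun c' => congrFun (dualBlockSum_out P g) c'
    simp_rw [h2] at h1
    rwa [sum_mul_dualBlockSum] at h1
  have hF : (fun χ : AddChar G ℂ => a (Quotient.mk (dualSetoid P) χ)) = fun _ => 0 := by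
    funext χ
    refine Fintype.linearIndependent_iff.mp (AddChar.linearIndependent G ℂ)
      (fun χ => a (Quotient.mk (dualSetoid P) χ)) ?_ χ
    funext g
    simp only [Finset.sum_apply, Pi.smul_apply, smul_eq_mul, Pi.zero_apply]
    exact hg g
  have h3 := congrFun hF (Quotient.out c)
  simpa [Quotient.out_eq] using h3

lemma dual_card_le_bidual (P : Setoid G) :
    Nat.card (Quotient (dualSetoid P)) ≤ Nat.card (Quotient (bidualSetoid P)) := by
  rw [Nat.card_eq_fintype_card, Nat.card_eq_fintype_card]
  simpa [Module.finrank_fintype_fun_eq_card] using (U_linIndep P).fintype_card_le_finrank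

lemma exists_coeff (P : Setoid G)
    (hcard : Nat.card (Quotient P) = Nat.card (Quotient (dualSetoid P)))
    (c : Quotient (dualSetoid P)) :
    ∃ a : Quotient P → ℂ, ∀ g : G,
      dualBlockSum P g c = (Fintype.card G : ℂ) * a (Quotient.mk P (-g)) := by
  haveI : Nonempty (Quotient P) := ⟨Quotient.mk P 0⟩
  have hcard' : Fintype.card (Quotient P)
      = Module.finrank ℂ (Quotient (dualSetoid P) → ℂ) := by
    rw [Module.finrank_fintype_fun_eq_card, ← Nat.card_eq_fintype_card,
      ← Nat.card_eq_fintype_card]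
    exact hcard
  have hspan := (T_linIndep P).span_eq_top_of_card_eq_finrank hcard'
  set δ : Quotient (dualSetoid P) → ℂ := fun c' => if c' = c then 1 else 0 with hδdef
  have hmem : δ ∈ Submodule.span ℂ (Set.range
      (fun (m : Quotient P) (c : Quotient (dualSetoid P)) => blockSum P (Quotient.out c) m)) := by
    rw [hspan]; exact Submodule.mem_top
  obtain ⟨a, ha⟩ := (Submodule.mem_span_range_iff_exists_fun ℂ).mp hmem
  refine ⟨a, fun g => ?_⟩
  have hδ : ∀ χ : AddChar G ℂ, δ (Quotient.mk (dualSetoid P) χ)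
      = ∑ m : Quotient P, a m * blockSum P χ m := by
    intro χ
    have := congrFun ha (Quotient.mk (dualSetoid P) χ)
    simp only [Finset.sum_apply, Pi.smul_apply, smul_eq_mul] at this
    simp_rw [blockSum_out] at this
    exact this.symm
  have hstart : dualBlockSum P g c
      = ∑ χ : AddChar G ℂ, δ (Quotient.mk (dualSetoid P) χ) * χ g := by
    rw [dualBlockSum_eq_sum]
    refine Finset.sum_congr rfl fun χ _ => ?_
    by_cases hc : Quotient.mk (dualSetoid P) χ = c
    · rw [if_pos hc]; simp [δ, hc]
    · rw [if_neg hc]; simp [δ, hc]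
  rw [hstart]
  simp_rw [hδ, Finset.sum_mul]
  rw [Finset.sum_comm]
  have step : ∀ m : Quotient P, ∑ χ : AddChar G ℂ, a m * blockSum P χ m * χ g
      = a m * (if Quotient.mk P (-g) = m then (Fintype.card G : ℂ) else 0) := by
    intro m
    simp_rw [mul_assoc, ← Finset.mul_sum]
    rw [key]
  simp_rw [step, mul_ite, mul_zero]
  rw [Finset.sum_ite_eq Finset.univ (Quotient.mk P (-g))
    (fun m => a m * (Fintype.card G : ℂ))]
  simp [mul_comm]

/-- A partition `P` of `G` is Fourier-reflexive (`P̂̂ = P`) if and only if `P` and its dual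
partition `P̂` have the same number of blocks. -/
theorem reflexive_iff_card_blocks_eq (P : Setoid G) :
    bidualSetoid P = P ↔ Nat.card (Quotient P) = Nat.card (Quotient (dualSetoid P)) := by
  constructor
  · intro h
    have h1 := card_le_dual P
    have h2 := dual_card_le_bidual P
    have h3 : Nat.card (Quotient (bidualSetoid P)) = Nat.card (Quotient P) := by rw [h]
    omega
  · intro h
    refine Setoid.ext fun g g' => ?_
    have hker : (bidualSetoid P).r g g' ↔ dualBlockSum P g = dualBlockSum P g' := Iff.rfl
    constructor
    · intro hr
      have hdb : dualBlockSum P g = dualBlockSum P g' := hr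
      have h2 : dualBlockSum P (-g) = dualBlockSum P (-g') :=
        (dualBlockSum_neg_iff P g g').mpr hdb
      have h3 := mk_neg_eq P (-g) (-g') h2
      rw [neg_neg, neg_neg] at h3
      exact Quotient.exact h3
    · intro hr
      have hm : Quotient.mk P g = Quotient.mk P g' := Quotient.sound hr
      show dualBlockSum P g = dualBlockSum P g'
      refine (dualBlockSum_neg_iff P g g').mp ?_
      funext c
      obtain ⟨a, ha⟩ := exists_coeff P h c
      rw [ha (-g), ha (-g'), neg_neg, neg_neg, hm]
end

section
/- Let G_1, …, G_n be finite abelian groups, 𝒢 = G_1 × ⋯ × G_n, and for each i let 𝒫_i = (P_{i,1} | … | P_{i,M_i}) be a Fourier-reflexive partition of G_i with dual 𝒫̂_i = (Q_{i,1} | … | Q_{i,M_i}); let K^{(i)} ∈ ℂ^{M_i×M_i} be the Krawtchouk matrix of (𝒫̂_i, 𝒫_i), i.e., K^{(i)}_{m,ℓ} = Σ_{χ∈Q_{i,ℓ}} χ(g) for any g ∈ P_{i,m}. For a subgroup C ≤ 𝒢 define the product partition enumerator PE_{𝒬,C} = Σ_{g∈C} ∏_{i=1}^n X_{i,m(g_i)}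 in ℂ[X_{i,m} : 1 ≤ i ≤ n, 1 ≤ m ≤ M_i], where m(g_i) is the index with g_i ∈ P_{i,m(g_i)}, and define PE_{𝒬̂,C^⊥} = Σ_{χ∈C^⊥} ∏_{i=1}^n X_{i,m(χ_i)} with m(χ_i) the index with χ_i ∈ Q_{i,m(χ_i)}. Then PE_{𝒬̂,C^⊥} = (1/|C|) · ℳ'(PE_{𝒬,C}), where ℳ' is the ℂ-algebra homomorphism determined by ℳ'(X_{i,m}) = Σ_{ℓ=1}^{M_i} K^{(i)}_{m,ℓ} X_{i,ℓ}. -/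
open Finset
open scoped Classical

variable {ι : Type*} [Fintype ι] [DecidableEq ι]
  {H : ι → Type*} [∀ i, AddCommGroup (H i)] [∀ i, Fintype (H i)]

/-- The `i`-th component of a character of a product group, under the canonical
identification of the character group of a product with the product of the character
groups. -/
noncomputable def comp1 (χ : AddChar (∀ i, H i) ℂ) (i : ι) : AddChar (H i) ℂ :=
  χ.compAddMonoidHom (AddMonoidHom.single H i)

lemma addchar_map_sum {A M : Type*} [AddCommMonoid A] [CommMonoid M]
    (χ : AddChar A M) {β : Type*} (s : Finset β) (x : β → A) :
    χ (∑ b ∈ s, x b) = ∏ b ∈ s, χ (x b) := by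
  induction s using Finset.cons_induction with
  | empty => simp
  | cons a s ha ih =>
      rw [Finset.cons_eq_insert, Finset.sum_insert ha, Finset.prod_insert ha,
        AddChar.map_add_eq_mul, ih]

/-- Product of characters as a character on the Pi type. -/
noncomputable def piChar (f : ∀ i, AddChar (H i) ℂ) : AddChar (∀ i, H i) ℂ where
  toFun g := ∏ i, f i (g i)
  map_zero_eq_one' := by simp
  map_add_eq_mul' := fun g h => by
    simp [AddChar.map_add_eq_mul, Finset.prod_mul_distrib]

@[simp] lemma piChar_apply (f : ∀ i, AddChar (H i) ℂ) (g : ∀ i, H i) :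
    piChar f g = ∏ i, f i (g i) := rfl

lemma comp1_apply (χ : AddChar (∀ i, H i) ℂ) (i : ι) (x : H i) :
    comp1 χ i x = χ (Pi.single i x) := rfl

lemma char_eq_prod_comp1 (χ : AddChar (∀ i, H i) ℂ) (g : ∀ i, H i) :
    χ g = ∏ i, comp1 χ i (g i) := by
  conv_lhs => rw [← Finset.univ_sum_single g]
  rw [addchar_map_sum]
  rfl

lemma comp1_piChar (f : ∀ i, AddChar (H i) ℂ) : (fun i => comp1 (piChar f) i) = f := by
  funext i
  ext x
  rw [comp1_apply, piChar_apply]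
  rw [Fintype.prod_eq_single i (fun j hj => by simp [Pi.single_eq_of_ne hj])]
  simp

/-- Equivalence between characters on a Pi type and tuples of characters. -/
noncomputable def charPiEquiv : AddChar (∀ i, H i) ℂ ≃ (∀ i, AddChar (H i) ℂ) where
  toFun χ := fun i => comp1 χ i
  invFun := piChar
  left_inv χ := by
    ext g
    rw [piChar_apply, ← char_eq_prod_comp1]
  right_inv := comp1_piChar

set_option linter.unusedSectionVars false in
lemma step1' {κ : ι → Type*} [∀ i, Fintype (κ i)]
    (q : ∀ i, AddChar (H i) ℂ → κ i) (i : ι) (gi : H i) (c : κ i → ℂ)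
    (hKi : ∀ ℓ : κ i, c ℓ = ∑ ψ : AddChar (H i) ℂ, if q i ψ = ℓ then ψ gi else 0) :
    (∑ ℓ : κ i, MvPolynomial.C (c ℓ) * MvPolynomial.X (⟨i, ℓ⟩ : Σ i, κ i)
        : MvPolynomial (Σ i, κ i) ℂ) =
    ∑ ψ : AddChar (H i) ℂ, MvPolynomial.C (ψ gi) * MvPolynomial.X ⟨i, q i ψ⟩ := by
  calc (∑ ℓ : κ i, MvPolynomial.C (c ℓ) * MvPolynomial.X (⟨i, ℓ⟩ : Σ i, κ i)
        : MvPolynomial (Σ i, κ i) ℂ)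
      = ∑ ℓ : κ i, ∑ ψ : AddChar (H i) ℂ,
          (if q i ψ = ℓ then MvPolynomial.C (ψ gi) * MvPolynomial.X (⟨i, ℓ⟩ : Σ i, κ i)
            else 0) := by
        refine Finset.sum_congr rfl fun ℓ _ => ?_
        rw [hKi, map_sum, Finset.sum_mul]
        exact Finset.sum_congr rfl fun ψ _ => by split_ifs <;> simp
    _ = ∑ ψ : AddChar (H i) ℂ, ∑ ℓ : κ i,
          (if q i ψ = ℓ then MvPolynomial.C (ψ gi) * MvPolynomial.X (⟨i, ℓ⟩ : Σ i, κ i)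
            else 0) := Finset.sum_comm
    _ = ∑ ψ : AddChar (H i) ℂ, MvPolynomial.C (ψ gi) * MvPolynomial.X ⟨i, q i ψ⟩ := by
        refine Finset.sum_congr rfl fun ψ _ => ?_
        simp

set_option maxHeartbeats 2000000 in
/-- **MacWilliams identity for product partition enumerators.**
For each `i`, the fibers of `p i` are the blocks of a Fourier-reflexive partition `𝒫ᵢ` of
`G i` and the fibers of `q i` are the blocks of its dual partition `𝒫̂ᵢ` (hypothesis
`hdual`); `K i` is the Krawtchouk matrix of `(𝒫̂ᵢ, 𝒫ᵢ)`.  For a code `C ≤ G₁ × ⋯ × Gₙ`,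
the product partition enumerator of the dual code `C^⊥` equals `|C|⁻¹` times the image of
the product partition enumerator of `C` under the MacWilliams transformation `ℳ'`, the
algebra homomorphism with `ℳ'(X_{i,m}) = Σ_ℓ K^{(i)}_{m,ℓ} X_{i,ℓ}`. -/
theorem macwilliams_product_partition_enumerator
    {κ : ι → Type*} [∀ i, Fintype (κ i)]
    (p : ∀ i, H i → κ i) (q : ∀ i, AddChar (H i) ℂ → κ i)
    (hp : ∀ i, Function.Surjective (p i)) (hq : ∀ i, Function.Surjective (q i))
    (hdual : ∀ (i : ι) (χ χ' : AddChar (H i) ℂ),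
      q i χ = q i χ' ↔ ∀ m : κ i,
        (∑ g : H i, if p i g = m then χ g else 0) =
        (∑ g : H i, if p i g = m then χ' g else 0))
    (K : ∀ i, κ i → κ i → ℂ)
    (hK : ∀ (i : ι) (g : H i) (ℓ : κ i),
      K i (p i g) ℓ = ∑ᶠ χ : AddChar (H i) ℂ, if q i χ = ℓ then χ g else 0)
    (C : AddSubgroup (∀ i, H i))
    (PE PEdual : MvPolynomial (Σ i, κ i) ℂ)
    (hPE : PE = ∑ g : ∀ i, H i,
      if g ∈ C then ∏ i, MvPolynomial.X ⟨i, p i (g i)⟩ else 0)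
    (hPEdual : PEdual = ∑ᶠ χ : AddChar (∀ i, H i) ℂ,
      if ∀ h ∈ C, χ h = 1 then ∏ i, MvPolynomial.X ⟨i, q i (comp1 χ i)⟩ else 0) :
    PEdual = (Nat.card C : ℂ)⁻¹ •
      (MvPolynomial.aeval fun s : Σ i, κ i =>
        ∑ ℓ : κ s.1, MvPolynomial.C (K s.1 s.2 ℓ) * MvPolynomial.X ⟨s.1, ℓ⟩) PE := by
  classical
  subst hPE hPEdual
  have hcard : (Nat.card C : ℂ) ≠ 0 := Nat.cast_ne_zero.2 Nat.card_pos.ne'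
  -- orthogonality
  have orth : ∀ χ : AddChar (∀ i, H i) ℂ,
      (∑ c : C, χ (c : ∀ i, H i)) =
        if ∀ h ∈ C, χ h = 1 then (Nat.card C : ℂ) else 0 := by
    intro χ
    have key := AddChar.sum_eq_ite (χ.compAddMonoidHom C.subtype)
    have hiff : (χ.compAddMonoidHom C.subtype = 0) ↔ (∀ h ∈ C, χ h = 1) := by
      constructor
      · intro h0 x hx
        simpa using DFunLike.congr_fun h0 (⟨x, hx⟩ : C)
      · intro h
        ext ⟨c, hc⟩
        simpa using h c hc
    rw [show (∑ c : C, χ (c : ∀ i, H i))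
        = ∑ c : C, (χ.compAddMonoidHom C.subtype) c from rfl, key,
      Nat.card_eq_fintype_card]
    simp [hiff]
  -- pointwise evaluation of the MacWilliams transform on a monomial
  have key : ∀ g : ∀ i, H i,
      (MvPolynomial.aeval fun s : Σ i, κ i =>
          ∑ ℓ : κ s.1, MvPolynomial.C (K s.1 s.2 ℓ) * MvPolynomial.X ⟨s.1, ℓ⟩)
        (∏ i, (MvPolynomial.X (⟨i, p i (g i)⟩ : Σ i, κ i) : MvPolynomial (Σ i, κ i) ℂ)) =
      ∑ χ : AddChar (∀ i, H i) ℂ, MvPolynomial.C (χ g) *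
        ∏ i, MvPolynomial.X (⟨i, q i (comp1 χ i)⟩ : Σ i, κ i) := by
    intro g
    rw [map_prod]
    simp only [MvPolynomial.aeval_X]
    calc ∏ i, ∑ ℓ : κ i, MvPolynomial.C (K i (p i (g i)) ℓ)
            * MvPolynomial.X (⟨i, ℓ⟩ : Σ i, κ i)
        = ∏ i, ∑ ψ : AddChar (H i) ℂ, MvPolynomial.C (ψ (g i))
            * MvPolynomial.X (⟨i, q i ψ⟩ : Σ i, κ i) :=
          Finset.prod_congr rfl fun i _ => step1' q i (g i) _
            (fun ℓ => by rw [hK i (g i) ℓ, finsum_eq_sum_of_fintype])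
      _ = ∑ f ∈ Fintype.piFinset (fun i => (univ : Finset (AddChar (H i) ℂ))),
            ∏ i, MvPolynomial.C (f i (g i)) * MvPolynomial.X (⟨i, q i (f i)⟩ : Σ i, κ i) :=
          Finset.prod_univ_sum _ _
      _ = ∑ f : ∀ i, AddChar (H i) ℂ,
            ∏ i, MvPolynomial.C (f i (g i)) * MvPolynomial.X (⟨i, q i (f i)⟩ : Σ i, κ i) := by
          rw [Fintype.piFinset_univ]
      _ = ∑ χ : AddChar (∀ i, H i) ℂ,
            ∏ i, MvPolynomial.C ((comp1 χ i) (g i))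
              * MvPolynomial.X (⟨i, q i (comp1 χ i)⟩ : Σ i, κ i) :=
          (Equiv.sum_comp charPiEquiv _).symm
      _ = ∑ χ : AddChar (∀ i, H i) ℂ, MvPolynomial.C (χ g) *
            ∏ i, MvPolynomial.X (⟨i, q i (comp1 χ i)⟩ : Σ i, κ i) := by
          refine Finset.sum_congr rfl fun χ _ => ?_
          rw [Finset.prod_mul_distrib, ← map_prod, ← char_eq_prod_comp1]
  -- rewrite the code sum as a sum over the subgroup
  have hsub : (∑ g : ∀ i, H i,
        if g ∈ C then (∏ i, MvPolynomial.X (⟨i, p i (g i)⟩ : Σ i, κ i)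
          : MvPolynomial (Σ i, κ i) ℂ) else 0)
      = ∑ c : C, ∏ i, MvPolynomial.X (⟨i, p i ((c : ∀ i, H i) i)⟩ : Σ i, κ i) := by
    rw [← Finset.sum_filter]
    exact Finset.sum_subtype _ (by simp) _
  have main : (MvPolynomial.aeval fun s : Σ i, κ i =>
        ∑ ℓ : κ s.1, MvPolynomial.C (K s.1 s.2 ℓ) * MvPolynomial.X ⟨s.1, ℓ⟩)
      (∑ g : ∀ i, H i,
        if g ∈ C then (∏ i, MvPolynomial.X (⟨i, p i (g i)⟩ : Σ i, κ i)
          : MvPolynomial (Σ i, κ i) ℂ) else 0)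
      = ∑ χ : AddChar (∀ i, H i) ℂ,
          MvPolynomial.C (if ∀ h ∈ C, χ h = 1 then (Nat.card C : ℂ) else 0) *
            ∏ i, MvPolynomial.X (⟨i, q i (comp1 χ i)⟩ : Σ i, κ i) := by
    rw [hsub, map_sum]
    simp only [key]
    calc ∑ c : C, ∑ χ : AddChar (∀ i, H i) ℂ, MvPolynomial.C (χ (c : ∀ i, H i)) *
            ∏ i, MvPolynomial.X (⟨i, q i (comp1 χ i)⟩ : Σ i, κ i)
        = ∑ χ : AddChar (∀ i, H i) ℂ, ∑ c : C, MvPolynomial.C (χ (c : ∀ i, H i)) *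
            ∏ i, MvPolynomial.X (⟨i, q i (comp1 χ i)⟩ : Σ i, κ i) := Finset.sum_comm
      _ = ∑ χ : AddChar (∀ i, H i) ℂ, MvPolynomial.C (∑ c : C, χ (c : ∀ i, H i)) *
            ∏ i, MvPolynomial.X (⟨i, q i (comp1 χ i)⟩ : Σ i, κ i) := by
          refine Finset.sum_congr rfl fun χ _ => ?_
          rw [← Finset.sum_mul, ← map_sum]
      _ = ∑ χ : AddChar (∀ i, H i) ℂ,
            MvPolynomial.C (if ∀ h ∈ C, χ h = 1 then (Nat.card C : ℂ) else 0) *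
              ∏ i, MvPolynomial.X (⟨i, q i (comp1 χ i)⟩ : Σ i, κ i) := by
          refine Finset.sum_congr rfl fun χ _ => ?_
          rw [orth]
  rw [finsum_eq_sum_of_fintype, main, Finset.smul_sum]
  refine Finset.sum_congr rfl fun χ _ => ?_
  split_ifs with h
  · rw [← MvPolynomial.smul_eq_C_mul, smul_smul, inv_mul_cancel₀ hcard, one_smul]
  · simp
end

section
/- Let R be a finite commutative ring with identity admitting a generating character χ, and let α : Rⁿ → (Rⁿ)̂, v ↦ χ_v with χ_v(a) = χ(v·a), be the induced isomorphism. For a submodule C ⊆ Rⁿ, let C^⊥⊥ = {v ∈ Rⁿ : v·a = 0 for all a ∈ C} be the dot-product dual and C^⊥ = {ψ ∈ (Rⁿ)̂ : ψ(a) = 1 for all a ∈ C} the character-theoretic dual. Then α(C^⊥⊥) = C^⊥. -/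
open Finset
open scoped Classical

variable {R : Type*} [CommRing R] [Fintype R]

/-- `χ` is a generating character of the finite commutative ring `R`:  the map `r ↦ r·χ`
(where `(r·χ)(a) = χ(r·a)`) is an `R`-module isomorphism from `R` to the character module
`R̂` (bijective, additive, and compatible with the scalar multiplications). -/
def IsGeneratingChar (χ : AddChar R ℂ) : Prop :=
  Function.Bijective (fun r : R => χ.mulShift r) ∧
  (∀ r s : R, χ.mulShift (r + s) = χ.mulShift r * χ.mulShift s) ∧
  (∀ r s a : R, χ.mulShift (r * s) a = χ.mulShift s (r * a))

/-- The character `χ_v : a ↦ χ(v·a)` of `(Rⁿ, +)`, where `v·a = Σ_i v_i a_i` is the dot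
product. -/
noncomputable def dotChar {n : ℕ} (χ : AddChar R ℂ) (v : Fin n → R) :
    AddChar (Fin n → R) ℂ :=
  χ.compAddMonoidHom
    { toFun := fun a => ∑ i, v i * a i
      map_zero' := by simp
      map_add' := fun a b => by simp [mul_add, Finset.sum_add_distrib] }

lemma addChar_map_sum {M : Type*} [AddCommMonoid M] (φ : AddChar M ℂ) {ι : Type*}
    (s : Finset ι) (f : ι → M) : φ (∑ i ∈ s, f i) = ∏ i ∈ s, φ (f i) := by
  induction s using Finset.cons_induction with
  | empty => simp
  | cons i s hi ih => rw [Finset.sum_cons, Finset.prod_cons, AddChar.map_add_eq_mul, ih]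

/-- For a linear code `C ⊆ Rⁿ` over a finite commutative ring `R` with generating
character `χ`, the isomorphism `α : v ↦ χ_v` maps the dot-product dual
`C^⊥⊥ = {v : v·a = 0 ∀ a ∈ C}` onto the character-theoretic dual
`C^⊥ = {ψ : ψ(a) = 1 ∀ a ∈ C}`. -/
theorem image_dotDual_eq_charDual (n : ℕ) (χ : AddChar R ℂ) (hχ : IsGeneratingChar χ)
    (C : Submodule R (Fin n → R)) :
    (fun v : Fin n → R => dotChar χ v) '' {v : Fin n → R | ∀ a ∈ C, ∑ i, v i * a i = 0} =
      {ψ : AddChar (Fin n → R) ℂ | ∀ a ∈ C, ψ a = 1} := by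
  ext ψ
  constructor
  · rintro ⟨v, hv, rfl⟩ a ha
    show χ (∑ i, v i * a i) = 1
    rw [hv a ha, AddChar.map_zero_eq_one]
  · intro hψ
    -- build v with χ.mulShift (v i) = ψ ∘ single i
    have hsurj := hχ.1.2
    choose v hv using fun i =>
      hsurj (ψ.compAddMonoidHom (AddMonoidHom.single (fun _ : Fin n => R) i))
    have key : dotChar χ v = ψ := by
      ext a
      show χ (∑ i, v i * a i) = ψ a
      have h1 : χ (∑ i, v i * a i) = ∏ i, χ (v i * a i) := by
        rw [addChar_map_sum]
      have h2 : ∀ i, χ (v i * a i) = ψ (Pi.single i (a i)) := by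
        intro i
        have := congrArg (fun f : AddChar R ℂ => f (a i)) (hv i)
        simpa [AddChar.mulShift_apply, AddChar.compAddMonoidHom] using this
      have h3 : ψ a = ∏ i, ψ (Pi.single i (a i)) := by
        conv_lhs => rw [← Finset.univ_sum_single a]
        rw [addChar_map_sum]
      rw [h1, h3]
      exact Finset.prod_congr rfl fun i _ => h2 i
    refine ⟨v, ?_, key⟩
    intro a ha
    -- for all r, χ (r * (v·a)) = 1
    have hall : ∀ r : R, χ ((∑ i, v i * a i) * r) = 1 := by
      intro r
      have hra : r • a ∈ C := C.smul_mem r ha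
      have := hψ (r • a) hra
      rw [← key] at this
      have h4 : (∑ i, v i * (r • a) i) = (∑ i, v i * a i) * r := by
        rw [Finset.sum_mul]
        refine Finset.sum_congr rfl fun i _ => ?_
        simp [Pi.smul_apply, smul_eq_mul]; ring
      calc χ ((∑ i, v i * a i) * r) = χ (∑ i, v i * (r • a) i) := by rw [h4]
        _ = 1 := this
    have hms : χ.mulShift (∑ i, v i * a i) = χ.mulShift 0 := by
      ext r
      simp [AddChar.mulShift_apply, hall r]
    exact hχ.1.1 hms
end
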